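/- arXiv:1102.0304 — 5 statements merged into one kernel-verified Lean document; each statement's English description precedes it below -/
import Mathlib

section
/- Let ι : α → α be a measurable involution (ι ∘ ι = id) of a measurable space α, and let ν and ν' be σ-finite measures on α such that the pushforward measure ι_*ν is mutually absolutely continuous with ν and ι_*ν' is mutually absolutely continuous with ν'. Suppose ν' = ν₀ + ν₁ where ν₀ is mutually singular with ν and ν₁ is absolutely continuous with respect to ν (the Lebesgue decomposition of ν' with respect to ν). Then ι_*ν₀ is mutually absolutely continuous with ν₀, and ι_*ν₁ is mutually absolutely continuous with ν₁. -/
open MeasureTheory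

private lemma aux_decomp_mono {α : Type*} [MeasurableSpace α]
    {μ μ' a b a' b' ν : Measure α}
    (hμ : μ = a + b) (hμ' : μ' = a' + b') (hac : μ ≪ μ')
    (ha : a.MutuallySingular ν) (ha' : a'.MutuallySingular ν)
    (hb : b ≪ ν) (hb' : b' ≪ ν) : a ≪ a' ∧ b ≪ b' := by
  obtain ⟨s, hs, has, hνs⟩ := ha
  obtain ⟨s', hs', has', hνs'⟩ := ha'
  set t := s ∩ s' with ht
  have hνt : ν tᶜ = 0 := by
    rw [ht, Set.compl_inter]
    exact le_antisymm (le_trans (measure_union_le _ _) (by simp [hνs, hνs'])) zero_le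
  have hbt : b tᶜ = 0 := hb hνt
  have hb't : b' tᶜ = 0 := hb' hνt
  have hat : a t = 0 := measure_mono_null Set.inter_subset_left has
  have ha't : a' t = 0 := measure_mono_null Set.inter_subset_right has'
  constructor
  · intro E hE
    have h1 : μ' (E ∩ tᶜ) = 0 := by
      rw [hμ']
      simp only [Measure.add_apply]
      have : a' (E ∩ tᶜ) = 0 :=
        measure_mono_null Set.inter_subset_left hE
      have h2 : b' (E ∩ tᶜ) = 0 :=
        measure_mono_null Set.inter_subset_right hb't
      simp [this, h2]
    have h2 : μ (E ∩ tᶜ) = 0 := hac h1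
    have h3 : a (E ∩ tᶜ) = 0 := by
      rw [hμ] at h2
      simp only [Measure.add_apply, add_eq_zero] at h2
      exact h2.1
    have h4 : a (E ∩ t) = 0 := measure_mono_null Set.inter_subset_right hat
    refine le_antisymm ?_ zero_le
    calc a E ≤ a (E ∩ t) + a (E \ t) := measure_le_inter_add_diff _ _ _
    _ = 0 := by rw [h4, Set.diff_eq, h3, add_zero]
  · intro E hE
    have h1 : μ' (E ∩ t) = 0 := by
      rw [hμ']
      simp only [Measure.add_apply]
      have h2 : a' (E ∩ t) = 0 := measure_mono_null Set.inter_subset_right ha't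
      have h3 : b' (E ∩ t) = 0 := measure_mono_null Set.inter_subset_left hE
      simp [h2, h3]
    have h2 : μ (E ∩ t) = 0 := hac h1
    have h3 : b (E ∩ t) = 0 := by
      rw [hμ] at h2
      simp only [Measure.add_apply, add_eq_zero] at h2
      exact h2.2
    have h4 : b (E \ t) = 0 :=
      measure_mono_null (Set.diff_subset_compl _ _) hbt
    refine le_antisymm ?_ zero_le
    calc b E ≤ b (E ∩ t) + b (E \ t) := measure_le_inter_add_diff _ _ _
    _ = 0 := by rw [h3, h4, add_zero]

/-- **Lebesgue decomposition with respect to a quasi-invariant measure.**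
If `ι` is a measurable involution of `α`, `ν` and `ν'` are σ-finite measures each equivalent to
its pushforward under `ι`, and `ν' = ν₀ + ν₁` is the Lebesgue decomposition of `ν'` with respect
to `ν` (so `ν₀ ⟂ ν` and `ν₁ ≪ ν`), then `ν₀` and `ν₁` are each equivalent to their pushforwards
under `ι`. -/
theorem lebesgue_decomposition_quasi_invariant
    {α : Type*} [MeasurableSpace α] (ι : α → α) (hι : Measurable ι) (hinv : ι ∘ ι = id)
    (ν ν' ν₀ ν₁ : Measure α) [SigmaFinite ν] [SigmaFinite ν']
    (hν : ν.map ι ≪ ν ∧ ν ≪ ν.map ι) (hν' : ν'.map ι ≪ ν' ∧ ν' ≪ ν'.map ι)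
    (hsum : ν' = ν₀ + ν₁) (h₀ : ν₀.MutuallySingular ν) (h₁ : ν₁ ≪ ν) :
    (ν₀.map ι ≪ ν₀ ∧ ν₀ ≪ ν₀.map ι) ∧ (ν₁.map ι ≪ ν₁ ∧ ν₁ ≪ ν₁.map ι) := by
  have hmapsum : ν'.map ι = ν₀.map ι + ν₁.map ι := by
    rw [hsum, Measure.map_add _ _ hι]
  -- ν₀.map ι ⟂ ν
  have h₀' : (ν₀.map ι).MutuallySingular ν := by
    obtain ⟨s, hs, h0s, hνsc⟩ := h₀
    refine ⟨ι ⁻¹' s, hι hs, ?_, ?_⟩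
    · rw [Measure.map_apply hι (hι hs)]
      have : ι ⁻¹' (ι ⁻¹' s) = s := by
        rw [← Set.preimage_comp, hinv, Set.preimage_id]
      rw [this, h0s]
    · have h2 : ν.map ι sᶜ = 0 := hν.1 hνsc
      rw [Measure.map_apply hι hs.compl, Set.preimage_compl] at h2
      exact h2

  -- ν₁.map ι ≪ ν
  have h₁' : ν₁.map ι ≪ ν :=
    (h₁.map hι).trans hν.1
  have A := aux_decomp_mono hmapsum hsum hν'.1 h₀' h₀ h₁' h₁
  have B := aux_decomp_mono hsum hmapsum hν'.2 h₀ h₀' h₁ h₁'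
  exact ⟨⟨A.1, B.1⟩, ⟨A.2, B.2⟩⟩
end

section
/- Let X be a second countable, locally compact Hausdorff space with its Borel σ-algebra, and let μ and σ be finite Borel measures on X which are mutually singular. Let S : L²(X, μ) → L²(X, σ) be a bounded linear map satisfying S(f·g) = f·S(g) for every continuous compactly supported function f : X → ℂ and every g ∈ L²(X, μ) (where f·g and f·S(g) denote pointwise multiplication). Then S = 0. -/
open MeasureTheory

/-- Let `X` be a second countable, locally compact Hausdorff space with its Borel σ-algebra, and
let `μ`, `σ` be finite Borel measures on `X` which are mutually singular.  If
`S : L²(X, μ) → L²(X, σ)` is a bounded linear map which is a module map over the continuous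
compactly supported functions (i.e. `S (f • g) = f • S g` for all such `f`), then `S = 0`. -/
theorem module_map_eq_zero_of_mutuallySingular
    {X : Type*} [TopologicalSpace X] [SecondCountableTopology X] [LocallyCompactSpace X]
    [T2Space X] [MeasurableSpace X] [BorelSpace X]
    (μ σ : Measure X) [IsFiniteMeasure μ] [IsFiniteMeasure σ]
    (hsing : μ.MutuallySingular σ)
    (S : Lp ℂ 2 μ →L[ℂ] Lp ℂ 2 σ)
    (hmod : ∀ f : X → ℂ, Continuous f → HasCompactSupport f →
      ∀ (g g' : Lp ℂ 2 μ) (h' : Lp ℂ 2 σ),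
        ((g' : X → ℂ) =ᵐ[μ] fun x => f x * (g : X → ℂ) x) →
        ((h' : X → ℂ) =ᵐ[σ] fun x => f x * (S g : X → ℂ) x) →
        S g' = h') :
    S = 0 := by
  obtain ⟨s, hsm, hμs, hσsc⟩ := hsing
  refine ContinuousLinearMap.ext fun g => ?_
  rw [ContinuousLinearMap.zero_apply]
  have key : ∀ ε : ℝ, 0 < ε → ‖S g‖ ≤ ε := by
    intro ε hε
    have hS1 : (0:ℝ) < ‖S‖ + 1 := by positivity
    set ε₁ : ℝ := ε / (2 * (‖S‖ + 1)) with hε₁def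
    have hε₁ : 0 < ε₁ := by positivity
    obtain ⟨δ₁, hδ₁, H₁⟩ := (Lp.memLp g).eLpNorm_indicator_le one_le_two ENNReal.ofNat_ne_top hε₁
    obtain ⟨δ₂, hδ₂, H₂⟩ :=
      (Lp.memLp (S g)).eLpNorm_indicator_le one_le_two ENNReal.ofNat_ne_top (half_pos hε)
    -- choose a compact set K inside sᶜ carrying most of μ
    obtain ⟨K, hKs, hKc, hKd⟩ := hsm.compl.exists_isCompact_diff_lt (measure_ne_top μ _)
      (ENNReal.ofReal_pos.2 hδ₁).ne'
    -- σ K = 0, choose small open U ⊇ K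
    have hσK : σ K < ENNReal.ofReal δ₂ := by
      have h0 : σ K ≤ σ sᶜ := measure_mono hKs
      rw [hσsc] at h0
      exact lt_of_le_of_lt h0 (ENNReal.ofReal_pos.2 hδ₂)
    obtain ⟨U, hKU, hUo, hU⟩ := K.exists_isOpen_lt_of_lt _ hσK
    -- Urysohn function
    obtain ⟨f, hf1, hf0, hfc, hf01⟩ := exists_continuous_one_zero_of_isCompact hKc
      hUo.isClosed_compl (Set.disjoint_left.mpr fun {x} hx hx' => hx' (hKU hx))
    set fC : X → ℂ := fun x => (f x : ℂ) with hfCdef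
    have hfCcont : Continuous fC := Complex.continuous_ofReal.comp f.continuous
    have hfCsupp : HasCompactSupport fC :=
      hfc.comp_left (g := fun r : ℝ => (r : ℂ)) Complex.ofReal_zero
    have hg' : MemLp (fun x => fC x * (g : X → ℂ) x) 2 μ :=
      (Lp.memLp g).mul' (hfCcont.memLp_top_of_hasCompactSupport hfCsupp μ)
    have hh' : MemLp (fun x => fC x * (S g : X → ℂ) x) 2 σ :=
      (Lp.memLp (S g)).mul' (hfCcont.memLp_top_of_hasCompactSupport hfCsupp σ)
    set g' : Lp ℂ 2 μ := hg'.toLp _ with hg'def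
    set h' : Lp ℂ 2 σ := hh'.toLp _ with hh'def
    have hSg' : S g' = h' :=
      hmod fC hfCcont hfCsupp g g' h' hg'.coeFn_toLp hh'.coeFn_toLp
    -- bound ‖g - g'‖
    have hμK : μ Kᶜ ≤ ENNReal.ofReal δ₁ := by
      have hsub : Kᶜ ⊆ (sᶜ \ K) ∪ s := by
        intro x hx
        by_cases hxs : x ∈ s
        · exact Or.inr hxs
        · exact Or.inl ⟨hxs, hx⟩
      calc μ Kᶜ ≤ μ ((sᶜ \ K) ∪ s) := measure_mono hsub
        _ ≤ μ (sᶜ \ K) + μ s := measure_union_le _ _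
        _ = μ (sᶜ \ K) := by rw [hμs, add_zero]
        _ ≤ ENNReal.ofReal δ₁ := hKd.le
    have hgg' : ‖g - g'‖ ≤ ε₁ := by
      rw [Lp.norm_def]
      have hcoe : ⇑(g - g') =ᵐ[μ] fun x => (g : X → ℂ) x - fC x * (g : X → ℂ) x := by
        filter_upwards [Lp.coeFn_sub g g', hg'.coeFn_toLp] with x h1 h2
        simp only [h1, Pi.sub_apply]; rw [hg'def, h2]
      have hbound : eLpNorm (fun x => (g : X → ℂ) x - fC x * (g : X → ℂ) x) 2 μ ≤
          eLpNorm (Kᶜ.indicator (g : X → ℂ)) 2 μ := by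
        refine eLpNorm_mono fun x => ?_
        by_cases hx : x ∈ K
        · have hfx : fC x = 1 := by simp [fC, hf1 hx]
          rw [hfx, one_mul, sub_self, norm_zero]
          exact norm_nonneg _
        · rw [Set.indicator_of_mem (by simpa using hx)]
          obtain ⟨h0, h1⟩ := hf01 x
          calc ‖(g : X → ℂ) x - fC x * (g : X → ℂ) x‖
              = ‖(1 - fC x) * (g : X → ℂ) x‖ := by rw [sub_mul, one_mul]
            _ = ‖1 - fC x‖ * ‖(g : X → ℂ) x‖ := norm_mul _ _
            _ ≤ 1 * ‖(g : X → ℂ) x‖ := by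
                refine mul_le_mul_of_nonneg_right ?_ (norm_nonneg _)
                rw [hfCdef]
                rw [show (1 : ℂ) - ((f x : ℝ) : ℂ) = ((1 - f x : ℝ) : ℂ) by push_cast; ring]
                rw [Complex.norm_real, Real.norm_eq_abs, abs_of_nonneg (by linarith)]
                linarith
            _ = ‖(g : X → ℂ) x‖ := one_mul _
      have hind := H₁ Kᶜ hKc.measurableSet.compl hμK
      rw [eLpNorm_congr_ae hcoe]
      have := le_trans hbound hind
      calc (eLpNorm (fun x => (g : X → ℂ) x - fC x * (g : X → ℂ) x) 2 μ).toReal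
          ≤ (ENNReal.ofReal ε₁).toReal := ENNReal.toReal_mono ENNReal.ofReal_ne_top this
        _ = ε₁ := ENNReal.toReal_ofReal hε₁.le
    -- bound ‖h'‖
    have hh'norm : ‖h'‖ ≤ ε / 2 := by
      rw [Lp.norm_def, eLpNorm_congr_ae hh'.coeFn_toLp]
      have hbound : eLpNorm (fun x => fC x * (S g : X → ℂ) x) 2 σ ≤
          eLpNorm (U.indicator (⇑(S g) : X → ℂ)) 2 σ := by
        refine eLpNorm_mono fun x => ?_
        by_cases hx : x ∈ U
        · rw [Set.indicator_of_mem hx]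
          obtain ⟨h0, h1⟩ := hf01 x
          calc ‖fC x * (S g : X → ℂ) x‖ = ‖fC x‖ * ‖(S g : X → ℂ) x‖ := norm_mul _ _
            _ ≤ 1 * ‖(S g : X → ℂ) x‖ := by
                refine mul_le_mul_of_nonneg_right ?_ (norm_nonneg _)
                rw [hfCdef]
                rw [Complex.norm_real, Real.norm_eq_abs, abs_of_nonneg h0]
                exact h1
            _ = ‖(S g : X → ℂ) x‖ := one_mul _
        · have hfx : fC x = 0 := by simp [fC, hf0 (by simpa using hx : x ∈ Uᶜ)]
          rw [hfx, zero_mul, norm_zero]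
          exact norm_nonneg _
      have hind := H₂ U hUo.measurableSet hU.le
      calc (eLpNorm (fun x => fC x * (S g : X → ℂ) x) 2 σ).toReal
          ≤ (ENNReal.ofReal (ε / 2)).toReal :=
            ENNReal.toReal_mono ENNReal.ofReal_ne_top (le_trans hbound hind)
        _ = ε / 2 := ENNReal.toReal_ofReal (by linarith)
    -- combine
    have hmain : ‖S g‖ ≤ ‖S (g - g')‖ + ‖h'‖ := by
      have : S g = S (g - g') + h' := by
        rw [map_sub, hSg']; abel
      rw [this]
      exact norm_add_le _ _
    have hop : ‖S (g - g')‖ ≤ ‖S‖ * ε₁ := by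
      calc ‖S (g - g')‖ ≤ ‖S‖ * ‖g - g'‖ := S.le_opNorm _
        _ ≤ ‖S‖ * ε₁ := mul_le_mul_of_nonneg_left hgg' (norm_nonneg _)
    have h1 : ‖S‖ * ε₁ ≤ ε / 2 := by
      have h2 : ‖S‖ * ε₁ ≤ (‖S‖ + 1) * ε₁ := by nlinarith
      have h3 : (‖S‖ + 1) * ε₁ = ε / 2 := by
        rw [hε₁def]; field_simp
      linarith
    linarith
  have : ‖S g‖ ≤ 0 := le_of_forall_pos_le_add (by simpa using fun ε hε => key ε hε)
  simpa using norm_le_zero_iff.mp this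
end

section
/- Let X be a second countable, locally compact Hausdorff space with its Borel σ-algebra, μ a finite Borel measure on X, and E a separable complex Hilbert space. Let T : L²(X, μ) → L²(X, μ; E) be a bounded linear map satisfying T(f·g) = f·T(g) for every continuous compactly supported function f : X → ℂ and every g ∈ L²(X, μ). Then there exists a Borel measurable function β : X → E which is μ-essentially bounded, such that T(g) = g·β μ-almost everywhere for every g ∈ L²(X, μ), and ‖T‖ equals the μ-essential supremum of x ↦ ‖β(x)‖. -/
open MeasureTheory Filter Topology
open scoped ENNReal NNReal

/-- Let `X` be a second countable, locally compact Hausdorff space with its Borel σ-algebra, `μ`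
a finite Borel measure on `X`, and `E` a separable complex Hilbert space.  If
`T : L²(X, μ) → L²(X, μ; E)` is a bounded linear map which is a module map over the continuous
compactly supported functions, then there is a Borel measurable, μ-essentially bounded
`β : X → E` such that `T g = g • β` μ-a.e. for every `g`, and `‖T‖` is the μ-essential supremum
of `x ↦ ‖β x‖`. -/
theorem module_map_is_multiplication_by_section
    {X : Type*} [TopologicalSpace X] [SecondCountableTopology X] [LocallyCompactSpace X]
    [T2Space X] [MeasurableSpace X] [BorelSpace X]
    (μ : Measure X) [IsFiniteMeasure μ]
    (E : Type*) [NormedAddCommGroup E] [InnerProductSpace ℂ E] [CompleteSpace E]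
    [TopologicalSpace.SeparableSpace E]
    (T : Lp ℂ 2 μ →L[ℂ] Lp E 2 μ)
    (hmod : ∀ f : X → ℂ, Continuous f → HasCompactSupport f →
      ∀ (g g' : Lp ℂ 2 μ) (h' : Lp E 2 μ),
        ((g' : X → ℂ) =ᵐ[μ] fun x => f x * (g : X → ℂ) x) →
        ((h' : X → E) =ᵐ[μ] fun x => f x • (T g : X → E) x) →
        T g' = h') :
    ∃ β : X → E, StronglyMeasurable β ∧ eLpNorm β ⊤ μ ≠ ⊤ ∧
      (∀ g : Lp ℂ 2 μ, (T g : X → E) =ᵐ[μ] fun x => (g : X → ℂ) x • β x) ∧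
      ‖T‖ = (eLpNorm β ⊤ μ).toReal := by
  classical
  -- the constant function `1` in `L²`
  set one : Lp ℂ 2 μ := (memLp_const (1 : ℂ)).toLp (fun _ => (1 : ℂ)) with hone
  have hone_coe : (one : X → ℂ) =ᵐ[μ] fun _ => (1 : ℂ) := MemLp.coeFn_toLp _
  set β₀ : X → E := (T one : X → E) with hβ₀
  have hβ₀m : AEStronglyMeasurable β₀ μ := Lp.aestronglyMeasurable _
  set β : X → E := hβ₀m.mk β₀ with hβ
  have hβmeas : StronglyMeasurable β := hβ₀m.stronglyMeasurable_mk
  have hββ₀ : β₀ =ᵐ[μ] β := hβ₀m.ae_eq_mk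
  -- Step 1: the result for continuous compactly supported functions
  have key1 : ∀ f : X → ℂ, Continuous f → HasCompactSupport f → ∀ hf : MemLp f 2 μ,
      (T (hf.toLp f) : X → E) =ᵐ[μ] fun x => f x • β x := by
    intro f hc hcsp hf
    have hβ₀mem : MemLp β₀ 2 μ := Lp.memLp _
    obtain ⟨C, hC⟩ : ∃ C, ∀ x, ‖f x‖ ≤ C := hc.bounded_above_of_compact_support hcsp
    have hfb : MemLp (fun x => f x • β₀ x) 2 μ := by
      refine hβ₀mem.of_le_mul (c := C) (hc.aestronglyMeasurable.smul hβ₀mem.aestronglyMeasurable)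
        (Eventually.of_forall fun x => ?_)
      rw [norm_smul]
      exact mul_le_mul_of_nonneg_right (hC x) (norm_nonneg _)
    have heq := hmod f hc hcsp one (hf.toLp f) (hfb.toLp _)
      (by
        filter_upwards [hf.coeFn_toLp, hone_coe] with x h1 h2
        rw [h1, h2, mul_one])
      (by
        filter_upwards [hfb.coeFn_toLp] with x h1
        rw [h1])
    rw [heq]
    filter_upwards [hfb.coeFn_toLp, hββ₀] with x h1 h2
    rw [h1, h2]
  -- Step 2: the result for all `g`, by density
  have key : ∀ g : Lp ℂ 2 μ, (T g : X → E) =ᵐ[μ] fun x => (g : X → ℂ) x • β x := by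
    intro g
    have A : ∀ n : ℕ, ∃ f : X → ℂ, HasCompactSupport f ∧
        eLpNorm ((g : X → ℂ) - f) 2 μ ≤ ENNReal.ofReal ((n + 1 : ℝ))⁻¹ ∧
        Continuous f ∧ MemLp f 2 μ := by
      intro n
      refine (Lp.memLp g).exists_hasCompactSupport_eLpNorm_sub_le (by norm_num) ?_
      rw [Ne, ENNReal.ofReal_eq_zero, not_le]
      positivity
    choose f hcs hle hcont hmem using A
    set u : ℕ → Lp ℂ 2 μ := fun n => (hmem n).toLp (f n) with hu
    have hu_eq : ∀ n, (T (u n) : X → E) =ᵐ[μ] fun x => f n x • β x := fun n =>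
      key1 (f n) (hcont n) (hcs n) (hmem n)
    have hlim0 : Tendsto (fun n : ℕ => ((n : ℝ) + 1)⁻¹) atTop (𝓝 0) := by
      simpa [one_div] using (tendsto_one_div_add_atTop_nhds_zero_nat :
        Tendsto (fun n : ℕ => 1 / ((n : ℝ) + 1)) atTop (𝓝 0))
    have hu_tendsto : Tendsto (fun n => ‖u n - g‖) atTop (𝓝 0) := by
      refine squeeze_zero (fun n => norm_nonneg _) (fun n => ?_) hlim0
      rw [Lp.norm_def]
      refine ENNReal.toReal_le_of_le_ofReal (by positivity) ?_
      have h1 : ((u n - g : Lp ℂ 2 μ) : X → ℂ) =ᵐ[μ] fun x => f n x - (g : X → ℂ) x := by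
        filter_upwards [Lp.coeFn_sub (u n) g, (hmem n).coeFn_toLp] with x h1 h2
        rw [h1, Pi.sub_apply, h2]
      rw [eLpNorm_congr_ae h1]
      calc eLpNorm (fun x => f n x - (g : X → ℂ) x) 2 μ
          = eLpNorm ((g : X → ℂ) - f n) 2 μ := by
            rw [show (fun x => f n x - (g : X → ℂ) x) = f n - (g : X → ℂ) from rfl,
              eLpNorm_sub_comm]
        _ ≤ ENNReal.ofReal ((n + 1 : ℝ))⁻¹ := hle n
    have hu_lim : Tendsto u atTop (𝓝 g) := by
      rw [tendsto_iff_norm_sub_tendsto_zero]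
      exact hu_tendsto
    have hT_lim : Tendsto (fun n => T (u n)) atTop (𝓝 (T g)) :=
      (T.continuous.tendsto g).comp hu_lim
    -- convergence in measure of `f n` to `g`
    have h_im1 : TendstoInMeasure μ f atTop (g : X → ℂ) := by
      refine tendstoInMeasure_of_tendsto_eLpNorm (p := 2) (by norm_num)
        (fun n => (hcont n).aestronglyMeasurable) (Lp.aestronglyMeasurable g) ?_
      refine tendsto_of_tendsto_of_tendsto_of_le_of_le tendsto_const_nhds
        (?_ : Tendsto (fun n : ℕ => ENNReal.ofReal ((n + 1 : ℝ))⁻¹) atTop (𝓝 0))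
        (fun n => zero_le) (fun n => ?_)
      · simpa using ENNReal.tendsto_ofReal hlim0
      · calc eLpNorm (f n - (g : X → ℂ)) 2 μ
            = eLpNorm ((g : X → ℂ) - f n) 2 μ := eLpNorm_sub_comm _ _ _ _
          _ ≤ ENNReal.ofReal ((n + 1 : ℝ))⁻¹ := hle n
    obtain ⟨ns, hns_mono, hns_ae⟩ := h_im1.exists_seq_tendsto_ae
    -- convergence in measure of `T (u n)` to `T g`
    have h_im2 : TendstoInMeasure μ (fun n => (T (u n) : X → E)) atTop (T g : X → E) := by
      refine tendstoInMeasure_of_tendsto_eLpNorm (p := 2) (by norm_num)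
        (fun n => Lp.aestronglyMeasurable _) (Lp.aestronglyMeasurable _) ?_
      have heq : ∀ n, eLpNorm ((T (u n) : X → E) - (T g : X → E)) 2 μ
          = ENNReal.ofReal ‖T (u n) - T g‖ := by
        intro n
        rw [← eLpNorm_congr_ae (Lp.coeFn_sub (T (u n)) (T g)), Lp.norm_def,
          ENNReal.ofReal_toReal (Lp.eLpNorm_ne_top _)]
      simp only [heq]
      have : Tendsto (fun n => ‖T (u n) - T g‖) atTop (𝓝 0) :=
        tendsto_iff_norm_sub_tendsto_zero.mp hT_lim
      simpa using ENNReal.tendsto_ofReal this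
    have h_im2' : TendstoInMeasure μ (fun i => (T (u (ns i)) : X → E)) atTop
        (T g : X → E) := fun ε hε => (h_im2 ε hε).comp hns_mono.tendsto_atTop
    obtain ⟨ms, hms_mono, hms_ae⟩ := h_im2'.exists_seq_tendsto_ae
    have hall : ∀ᵐ x ∂μ, ∀ n, (T (u n) : X → E) x = f n x • β x := ae_all_iff.mpr hu_eq
    filter_upwards [hall, hns_ae, hms_ae] with x hx h1 h2
    have h3 : Tendsto (fun i => f (ns (ms i)) x • β x) atTop
        (𝓝 ((g : X → ℂ) x • β x)) :=
      Tendsto.smul (h1.comp hms_mono.tendsto_atTop) tendsto_const_nhds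
    have h4 : Tendsto (fun i => f (ns (ms i)) x • β x) atTop (𝓝 ((T g : X → E) x)) := by
      simpa only [hx] using h2
    exact tendsto_nhds_unique h4 h3
  -- Step 3: essential boundedness : `‖β x‖ ≤ ‖T‖` a.e.
  have hTnn : (0 : ℝ) ≤ ‖T‖ := ContinuousLinearMap.opNorm_nonneg T
  have hbound : ∀ᵐ x ∂μ, ‖β x‖ ≤ ‖T‖ := by
    have hnull : ∀ n : ℕ, μ {x | ‖T‖ + ((n : ℝ) + 1)⁻¹ ≤ ‖β x‖} = 0 := by
      intro n
      set ε : ℝ := ((n : ℝ) + 1)⁻¹ with hε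
      have hεpos : 0 < ε := by positivity
      set A := {x | ‖T‖ + ε ≤ ‖β x‖} with hA
      have hAm : MeasurableSet A := measurableSet_le measurable_const
        hβmeas.norm.measurable
      by_contra hA0
      have hgm : MemLp (A.indicator fun _ => (1 : ℂ)) 2 μ := (memLp_const 1).indicator hAm
      set gL := hgm.toLp _ with hgL
      have h2 : (fun x => (gL : X → ℂ) x • β x) =ᵐ[μ] A.indicator β := by
        filter_upwards [hgm.coeFn_toLp] with x hx
        rw [hx]
        by_cases hxA : x ∈ A
        · simp [Set.indicator_of_mem hxA]
        · simp [Set.indicator_of_notMem hxA]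
      have hnorm_eq : eLpNorm (A.indicator β) 2 μ = (‖T gL‖₊ : ℝ≥0∞) := by
        rw [← eLpNorm_congr_ae ((key gL).trans h2), Lp.nnnorm_def,
          ENNReal.coe_toNNReal (Lp.eLpNorm_ne_top _)]
      have hgLnorm : (‖gL‖₊ : ℝ≥0∞) = μ A ^ (1 / (2 : ℝ)) := by
        rw [Lp.nnnorm_def, ENNReal.coe_toNNReal (Lp.eLpNorm_ne_top _),
          eLpNorm_congr_ae hgm.coeFn_toLp,
          eLpNorm_indicator_const hAm (by norm_num) (by norm_num)]
        norm_num
      have upper : eLpNorm (A.indicator β) 2 μ ≤ ENNReal.ofReal ‖T‖ * μ A ^ (1 / (2 : ℝ)) := by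
        rw [hnorm_eq, ← hgLnorm, ← enorm_eq_nnnorm (T gL), ← ofReal_norm (T gL),
          ← enorm_eq_nnnorm gL, ← ofReal_norm gL, ← ENNReal.ofReal_mul hTnn]
        exact ENNReal.ofReal_le_ofReal (T.le_opNorm gL)
      have lower : ENNReal.ofReal (‖T‖ + ε) * μ A ^ (1 / (2 : ℝ))
          ≤ eLpNorm (A.indicator β) 2 μ := by
        have hconst : eLpNorm (A.indicator fun _ => (‖T‖ + ε)) 2 μ
            = ENNReal.ofReal (‖T‖ + ε) * μ A ^ (1 / (2 : ℝ)) := by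
          rw [eLpNorm_indicator_const hAm (by norm_num) (by norm_num),
            Real.enorm_eq_ofReal (by positivity)]
          norm_num
        rw [← hconst]
        refine eLpNorm_mono_ae (Eventually.of_forall fun x => ?_)
        by_cases hxA : x ∈ A
        · simp only [Set.indicator_of_mem hxA]
          rw [Real.norm_of_nonneg (by positivity)]
          exact hxA
        · simp [Set.indicator_of_notMem hxA]
      have hfin : μ A ^ (1 / (2 : ℝ)) ≠ ⊤ :=
        ENNReal.rpow_ne_top_of_nonneg (by norm_num) (measure_ne_top μ A)
      have hne : μ A ^ (1 / (2 : ℝ)) ≠ 0 := by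
        simp only [ne_eq, ENNReal.rpow_eq_zero_iff, not_or, not_and_or]
        constructor
        · exact Or.inl hA0
        · exact Or.inl (measure_ne_top μ A)
      have hcontra := (ENNReal.mul_le_mul_iff_left hne hfin).mp (lower.trans upper)
      rw [ENNReal.ofReal_le_ofReal_iff hTnn] at hcontra
      linarith
    have hsub : {x | ‖T‖ < ‖β x‖} ⊆ ⋃ n : ℕ, {x | ‖T‖ + ((n : ℝ) + 1)⁻¹ ≤ ‖β x‖} := by
      intro x hx
      obtain ⟨n, hn⟩ := exists_nat_one_div_lt (K := ℝ) (sub_pos.2 hx)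
      refine Set.mem_iUnion.2 ⟨n, ?_⟩
      rw [one_div] at hn
      simp only [Set.mem_setOf_eq]
      linarith
    have hnull' : μ {x | ‖T‖ < ‖β x‖} = 0 :=
      measure_mono_null hsub (measure_iUnion_null fun n => hnull n)
    rw [ae_iff]
    simpa only [not_le] using hnull'
  have hTop : eLpNorm β ⊤ μ ≤ ENNReal.ofReal ‖T‖ := by
    rw [eLpNorm_exponent_top]
    exact eLpNormEssSup_le_of_ae_bound hbound
  have hne_top : eLpNorm β ⊤ μ ≠ ⊤ := ne_top_of_le_ne_top ENNReal.ofReal_ne_top hTop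
  set s := (eLpNorm β ⊤ μ).toReal with hs
  have hβ_le_s : ∀ᵐ x ∂μ, ‖β x‖ ≤ s := by
    filter_upwards [enorm_ae_le_eLpNormEssSup β μ] with x hx
    have h1 : ((‖β x‖₊ : ℝ≥0∞)).toReal ≤ (eLpNormEssSup β μ).toReal :=
      ENNReal.toReal_mono (by rw [← eLpNorm_exponent_top]; exact hne_top) hx
    rw [ENNReal.coe_toReal, coe_nnnorm] at h1
    show ‖β x‖ ≤ (eLpNorm β ⊤ μ).toReal
    rw [eLpNorm_exponent_top]
    exact h1
  -- Step 4: `‖T‖ ≤ s`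
  have hTle : ‖T‖ ≤ s := by
    refine T.opNorm_le_bound ENNReal.toReal_nonneg fun g => ?_
    have h1 : eLpNorm ((T g : X → E)) 2 μ ≤ ENNReal.ofReal s * eLpNorm (g : X → ℂ) 2 μ := by
      rw [eLpNorm_congr_ae (key g)]
      have h2 : eLpNorm (s • (g : X → ℂ)) 2 μ
          = ENNReal.ofReal s * eLpNorm (g : X → ℂ) 2 μ := by
        rw [eLpNorm_const_smul, Real.enorm_eq_ofReal ENNReal.toReal_nonneg]
      rw [← h2]
      refine eLpNorm_mono_ae ?_
      filter_upwards [hβ_le_s] with x hx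
      rw [norm_smul, Pi.smul_apply, norm_smul,
        Real.norm_of_nonneg ENNReal.toReal_nonneg, mul_comm s]
      exact mul_le_mul_of_nonneg_left hx (norm_nonneg _)
    rw [Lp.norm_def, Lp.norm_def]
    calc (eLpNorm ((T g : X → E)) 2 μ).toReal
        ≤ (ENNReal.ofReal s * eLpNorm ((g : X → ℂ)) 2 μ).toReal :=
          ENNReal.toReal_mono
            (ENNReal.mul_ne_top ENNReal.ofReal_ne_top (Lp.eLpNorm_ne_top g)) h1
      _ = s * (eLpNorm ((g : X → ℂ)) 2 μ).toReal := by
          rw [ENNReal.toReal_mul, ENNReal.toReal_ofReal ENNReal.toReal_nonneg]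
  have hsle : s ≤ ‖T‖ := by
    have h := ENNReal.toReal_mono ENNReal.ofReal_ne_top hTop
    rwa [ENNReal.toReal_ofReal hTnn] at h
  exact ⟨β, hβmeas, hne_top, key, le_antisymm hTle hsle⟩
end

section
/- Let X be a second countable, locally compact Hausdorff space with its Borel σ-algebra and μ a finite Borel measure on X. Let S : L²(X, μ) → L²(X, μ) be a bounded linear operator that commutes with the multiplication operator M_f for every continuous function f : X → ℂ vanishing at infinity (M_f g = f·g). Then there exists a μ-essentially bounded Borel function g₀ : X → ℂ such that S = M_{g₀}, and ‖S‖ equals the μ-essential supremum of |g₀|. -/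
open MeasureTheory Filter
open scoped ENNReal NNReal

/-- Let `X` be a second countable, locally compact Hausdorff space with its Borel σ-algebra and
`μ` a finite Borel measure on `X`.  If a bounded operator `S` on `L²(X, μ)` commutes with the
multiplication operator `M_f` for every continuous `f : X → ℂ` vanishing at infinity, then `S`
is multiplication by a μ-essentially bounded Borel function `g₀`, and `‖S‖` is the μ-essential
supremum of `|g₀|`. -/
theorem commutant_of_multiplication_algebra
    {X : Type*} [TopologicalSpace X] [SecondCountableTopology X] [LocallyCompactSpace X]
    [T2Space X] [MeasurableSpace X] [BorelSpace X]
    (μ : Measure X) [IsFiniteMeasure μ]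
    (S : Lp ℂ 2 μ →L[ℂ] Lp ℂ 2 μ)
    (hcomm : ∀ f : X → ℂ, Continuous f → Tendsto f (cocompact X) (nhds 0) →
      ∀ (g g' h' : Lp ℂ 2 μ),
        ((g' : X → ℂ) =ᵐ[μ] fun x => f x * (g : X → ℂ) x) →
        ((h' : X → ℂ) =ᵐ[μ] fun x => f x * (S g : X → ℂ) x) →
        S g' = h') :
    ∃ g₀ : X → ℂ, Measurable g₀ ∧ eLpNorm g₀ ⊤ μ ≠ ⊤ ∧
      (∀ g : Lp ℂ 2 μ, (S g : X → ℂ) =ᵐ[μ] fun x => g₀ x * (g : X → ℂ) x) ∧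
      ‖S‖ = (eLpNorm g₀ ⊤ μ).toReal := by
  have h2top : (2 : ℝ≥0∞) ≠ ⊤ := ENNReal.ofNat_ne_top
  set one : Lp ℂ 2 μ := Lp.const 2 μ 1 with hone
  set g₀ : X → ℂ := ⇑(S one) with hg₀def
  have g₀meas : Measurable g₀ := (Lp.stronglyMeasurable (S one)).measurable
  have g₀mem : MemLp g₀ 2 μ := Lp.memLp (S one)
  -- membership of products with compactly supported continuous functions
  have hmulmem : ∀ f : X → ℂ, Continuous f → HasCompactSupport f →
      MemLp (fun x => f x * g₀ x) 2 μ := by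
    intro f fc fcs
    have := g₀mem.smul (r := 2) (fc.memLp_top_of_hasCompactSupport fcs μ)
    exact this
  -- what S does on compactly supported continuous functions
  have sEq : ∀ f : X → ℂ, ∀ (fc : Continuous f) (fcs : HasCompactSupport f)
      (hf2 : MemLp f 2 μ) (hfg : MemLp (fun x => f x * g₀ x) 2 μ),
      S (hf2.toLp f) = hfg.toLp _ := by
    intro f fc fcs hf2 hfg
    refine hcomm f fc fcs.is_zero_at_infty one (hf2.toLp f) (hfg.toLp _) ?_ ?_
    · filter_upwards [hf2.coeFn_toLp, Lp.coeFn_const 2 μ (1 : ℂ)] with x hx h1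
      rw [hx, h1]; simp
    · filter_upwards [hfg.coeFn_toLp] with x hx
      exact hx
  -- norm inequality on compactly supported continuous functions
  have key : ∀ f : X → ℂ, Continuous f → HasCompactSupport f →
      eLpNorm (fun x => f x * g₀ x) 2 μ ≤ (‖S‖₊ : ℝ≥0∞) * eLpNorm f 2 μ := by
    intro f fc fcs
    have hf2 : MemLp f 2 μ := fc.memLp_of_hasCompactSupport fcs
    have hfg := hmulmem f fc fcs
    have e := sEq f fc fcs hf2 hfg
    have hb : ‖hfg.toLp _‖ ≤ ‖S‖ * ‖hf2.toLp f‖ := e ▸ S.le_opNorm _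
    rw [Lp.norm_toLp _ hfg, Lp.norm_toLp f hf2] at hb
    refine (ENNReal.toReal_le_toReal hfg.eLpNorm_ne_top
      (ENNReal.mul_ne_top ENNReal.coe_ne_top hf2.eLpNorm_ne_top)).mp ?_
    rw [ENNReal.toReal_mul, ENNReal.coe_toReal, coe_nnnorm]
    exact hb
  -- squared-norm identity
  have sq2 : ∀ f : X → ℂ, eLpNorm f 2 μ ^ (2 : ℝ) = ∫⁻ x, (‖f x‖₊ : ℝ≥0∞) ^ (2 : ℝ) ∂μ := by
    intro f
    rw [eLpNorm_eq_lintegral_rpow_enorm_toReal (by norm_num) h2top, ENNReal.toReal_ofNat,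
      one_div, ENNReal.rpow_inv_rpow (by norm_num : (2:ℝ) ≠ 0)]
    rfl
  set F : X → ℝ≥0∞ := fun x => (‖g₀ x‖₊ : ℝ≥0∞) ^ (2 : ℝ) with hF
  have Fmeas : Measurable F := ENNReal.continuous_rpow_const.measurable.comp g₀meas.nnnorm.coe_nnreal_ennreal
  set C2 : ℝ≥0∞ := (‖S‖₊ : ℝ≥0∞) ^ (2 : ℝ) with hC2
  have hC2top : C2 ≠ ⊤ := (ENNReal.rpow_lt_top_of_nonneg (by norm_num) ENNReal.coe_ne_top).ne
  set ν : Measure X := μ.withDensity F with hν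
  have hFint : ∫⁻ x, F x ∂μ ≠ ⊤ := by
    rw [hF, ← sq2 g₀]
    exact (ENNReal.rpow_lt_top_of_nonneg (by norm_num) g₀mem.eLpNorm_ne_top).ne
  haveI hνfin : IsFiniteMeasure ν := isFiniteMeasure_withDensity hFint
  have hKU : ∀ K U : Set X, IsCompact K → IsOpen U → K ⊆ U → ν K ≤ C2 * μ U := by
    intro K U hK hU hKsub
    obtain ⟨f, hf1, hf0, hfcs, hf01⟩ := exists_continuous_one_zero_of_isCompact hK
      hU.isClosed_compl (Set.disjoint_left.mpr fun x hxK hxU => hxU (hKsub hxK))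
    set fc : X → ℂ := fun x => (f x : ℂ) with hfc
    have fcc : Continuous fc := Complex.continuous_ofReal.comp f.continuous
    have fccs : HasCompactSupport fc := by
      have h := hfcs.comp_left (g := fun r : ℝ => (r : ℂ)) (by simp)
      exact h
    have hkey := key fc fcc fccs
    have hkey2 : (∫⁻ x, (‖fc x * g₀ x‖₊ : ℝ≥0∞) ^ (2:ℝ) ∂μ)
        ≤ C2 * ∫⁻ x, (‖fc x‖₊ : ℝ≥0∞) ^ (2:ℝ) ∂μ := by
      rw [← sq2, ← sq2, hC2, ← ENNReal.mul_rpow_of_nonneg _ _ (by norm_num : (0:ℝ) ≤ 2)]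
      exact ENNReal.rpow_le_rpow hkey (by norm_num)
    have hleft : ν K ≤ ∫⁻ x, (‖fc x * g₀ x‖₊ : ℝ≥0∞) ^ (2:ℝ) ∂μ := by
      rw [hν, withDensity_apply _ hK.measurableSet]
      calc ∫⁻ x in K, F x ∂μ = ∫⁻ x in K, (‖fc x * g₀ x‖₊ : ℝ≥0∞) ^ (2:ℝ) ∂μ := by
            refine setLIntegral_congr_fun hK.measurableSet (fun x hx => ?_)
            have hfx : f x = 1 := hf1 hx
            simp [hF, hfc, hfx]
        _ ≤ _ := setLIntegral_le_lintegral _ _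
    have hright : (∫⁻ x, (‖fc x‖₊ : ℝ≥0∞) ^ (2:ℝ) ∂μ) ≤ μ U := by
      calc ∫⁻ x, (‖fc x‖₊ : ℝ≥0∞) ^ (2:ℝ) ∂μ ≤ ∫⁻ x, U.indicator (fun _ => 1) x ∂μ := by
            refine lintegral_mono fun x => ?_
            by_cases hx : x ∈ U
            · rw [Set.indicator_of_mem hx]
              refine ENNReal.rpow_le_one ?_ (by norm_num)
              have h01 := hf01 x
              have hn : ‖fc x‖ ≤ 1 := by
                simp only [hfc, Complex.norm_real, Real.norm_eq_abs, abs_le]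
                exact ⟨by linarith [h01.1], h01.2⟩
              have h1' : ‖fc x‖₊ ≤ 1 := by
                rwa [← NNReal.coe_le_coe, coe_nnnorm, NNReal.coe_one]
              exact_mod_cast h1'
            · rw [Set.indicator_of_notMem hx]
              have hfx : fc x = 0 := by simp [hfc, hf0 hx]
              simp only [hfx, nnnorm_zero, ENNReal.coe_zero]
              rw [ENNReal.zero_rpow_of_pos (by norm_num)]
        _ = μ U := by
            rw [lintegral_indicator hU.measurableSet]; simp
    refine hleft.trans (hkey2.trans ?_)
    gcongr
  have hcomp : ∀ E : Set X, MeasurableSet E → ν E ≤ C2 * μ E := by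
    intro E hE
    refine le_of_forall_lt fun r hr => ?_
    obtain ⟨K, hKE, hK, hrK⟩ := hE.exists_lt_isCompact hr
    refine lt_of_lt_of_le hrK ?_
    refine ENNReal.le_of_forall_pos_le_add fun ε hε hfin => ?_
    have hδ : (ε : ℝ≥0∞) / C2 ≠ 0 :=
      (ENNReal.div_pos (by exact_mod_cast hε.ne') hC2top).ne'
    obtain ⟨U, hEU, hUopen, hUle⟩ := Set.exists_isOpen_le_add E μ hδ
    have h1 : ν K ≤ C2 * μ U := hKU K U hK hUopen (hKE.trans hEU)
    have h2 : C2 * μ U ≤ C2 * μ E + C2 * ((ε : ℝ≥0∞) / C2) := by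
      calc C2 * μ U ≤ C2 * (μ E + (ε : ℝ≥0∞) / C2) := by gcongr
        _ = C2 * μ E + C2 * ((ε : ℝ≥0∞) / C2) := by rw [mul_add]
    have h3 : C2 * ((ε : ℝ≥0∞) / C2) ≤ (ε : ℝ≥0∞) := by
      rcases eq_or_ne C2 0 with h | h
      · simp [h]
      · rw [ENNReal.mul_div_cancel h hC2top]
    calc ν K ≤ C2 * μ E + C2 * ((ε : ℝ≥0∞) / C2) := h1.trans h2
      _ ≤ C2 * μ E + (ε : ℝ≥0∞) := by gcongr
  have FleC2 : ∀ᵐ x ∂μ, F x ≤ C2 := by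
    refine ae_le_of_forall_setLIntegral_le_of_sigmaFinite₀ Fmeas.aemeasurable fun s hs _ => ?_
    have e1 : ∫⁻ x in s, F x ∂μ = ν s := (withDensity_apply _ hs).symm
    rw [e1]
    calc ν s ≤ C2 * μ s := hcomp s hs
      _ = ∫⁻ _ in s, C2 ∂μ := by rw [setLIntegral_const]
  have hb : ∀ᵐ x ∂μ, (‖g₀ x‖₊ : ℝ≥0∞) ≤ (‖S‖₊ : ℝ≥0∞) := by
    filter_upwards [FleC2] with x hx
    exact (ENNReal.rpow_le_rpow_iff (by norm_num : (0:ℝ) < 2)).mp hx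
  have hessSup : eLpNorm g₀ ⊤ μ ≤ (‖S‖₊ : ℝ≥0∞) := by
    rw [eLpNorm_exponent_top, eLpNormEssSup]
    exact essSup_le_of_ae_le _ hb
  have hfin : eLpNorm g₀ ⊤ μ ≠ ⊤ := (hessSup.trans_lt ENNReal.coe_lt_top).ne
  have g₀top : MemLp g₀ ⊤ μ := ⟨g₀meas.aestronglyMeasurable, hfin.lt_top⟩
  have hmem : ∀ g : Lp ℂ 2 μ, MemLp (fun x => g₀ x * (g : X → ℂ) x) 2 μ := by
    intro g
    have := (Lp.memLp g).smul (r := 2) g₀top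
    exact this
  have emul : ∀ u : X → ℂ, AEStronglyMeasurable u μ →
      eLpNorm (fun x => g₀ x * u x) 2 μ ≤ eLpNorm g₀ ⊤ μ * eLpNorm u 2 μ := by
    intro u hu
    simpa using eLpNorm_le_eLpNorm_top_mul_eLpNorm 2 g₀ hu (fun a b => a * b) 1
      (Filter.Eventually.of_forall fun x => by simp [nnnorm_mul])
  have main : ∀ g : Lp ℂ 2 μ, S g = (hmem g).toLp _ := by
    intro g
    have hdist : ∀ ε : ℝ, 0 < ε →
        ‖S g - (hmem g).toLp _‖ ≤ (‖S‖ + (eLpNorm g₀ ⊤ μ).toReal) * ε := by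
      intro ε hε
      obtain ⟨f, fcs, happ, fc, hf2⟩ :=
        (Lp.memLp g).exists_hasCompactSupport_eLpNorm_sub_le h2top
          (ε := ENNReal.ofReal ε)
          (fun hcon => absurd (ENNReal.ofReal_eq_zero.mp hcon) (not_le.mpr hε))
      set fL := hf2.toLp f with hfL
      have hfg := hmulmem f fc fcs
      have e := sEq f fc fcs hf2 hfg
      have h1 : ‖g - fL‖ ≤ ε := by
        rw [Lp.norm_def]
        have hcongr : eLpNorm (⇑(g - fL)) 2 μ = eLpNorm ((g : X → ℂ) - f) 2 μ := by
          apply eLpNorm_congr_ae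
          filter_upwards [Lp.coeFn_sub g fL, hf2.coeFn_toLp] with x hx hx2
          simp only [hx, Pi.sub_apply]
          rw [hfL, hx2]
        rw [hcongr]
        calc (eLpNorm ((g : X → ℂ) - f) 2 μ).toReal ≤ (ENNReal.ofReal ε).toReal :=
              ENNReal.toReal_mono ENNReal.ofReal_ne_top happ
          _ = ε := ENNReal.toReal_ofReal hε.le
      have h2 : ‖S fL - (hmem g).toLp _‖ ≤ (eLpNorm g₀ ⊤ μ).toReal * ε := by
        rw [hfL, e, Lp.norm_def]
        have hcongr : eLpNorm (⇑(hfg.toLp _ - (hmem g).toLp _)) 2 μ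
            = eLpNorm (fun x => g₀ x * (f x - (g : X → ℂ) x)) 2 μ := by
          apply eLpNorm_congr_ae
          filter_upwards [Lp.coeFn_sub (hfg.toLp _) ((hmem g).toLp _), hfg.coeFn_toLp,
            (hmem g).coeFn_toLp] with x hx hx1 hx2
          simp only [hx, Pi.sub_apply, hx1, hx2]
          ring
        rw [hcongr]
        have hb2 : eLpNorm (fun x => g₀ x * (f x - (g : X → ℂ) x)) 2 μ
            ≤ eLpNorm g₀ ⊤ μ * ENNReal.ofReal ε := by
          refine (emul _ (hf2.aestronglyMeasurable.sub (Lp.aestronglyMeasurable g))).trans ?_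
          gcongr
          rw [← eLpNorm_neg]
          simpa [neg_sub] using happ
        calc (eLpNorm (fun x => g₀ x * (f x - (g : X → ℂ) x)) 2 μ).toReal
            ≤ (eLpNorm g₀ ⊤ μ * ENNReal.ofReal ε).toReal :=
              ENNReal.toReal_mono (ENNReal.mul_ne_top hfin ENNReal.ofReal_ne_top) hb2
          _ = (eLpNorm g₀ ⊤ μ).toReal * ε := by
              rw [ENNReal.toReal_mul, ENNReal.toReal_ofReal hε.le]
      calc ‖S g - (hmem g).toLp _‖ ≤ ‖S g - S fL‖ + ‖S fL - (hmem g).toLp _‖ :=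
            norm_sub_le_norm_sub_add_norm_sub _ _ _
        _ ≤ ‖S‖ * ε + (eLpNorm g₀ ⊤ μ).toReal * ε := by
            refine add_le_add ?_ h2
            calc ‖S g - S fL‖ = ‖S (g - fL)‖ := by rw [map_sub]
              _ ≤ ‖S‖ * ‖g - fL‖ := S.le_opNorm _
              _ ≤ ‖S‖ * ε := mul_le_mul_of_nonneg_left h1 (norm_nonneg S)
        _ = (‖S‖ + (eLpNorm g₀ ⊤ μ).toReal) * ε := by ring
    by_contra hne
    have hpos : 0 < ‖S g - (hmem g).toLp _‖ := by
      rw [norm_pos_iff, sub_ne_zero]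
      exact hne
    have hcge0 : 0 ≤ ‖S‖ + (eLpNorm g₀ ⊤ μ).toReal :=
      add_nonneg (norm_nonneg _) ENNReal.toReal_nonneg
    set v := ‖S g - (hmem g).toLp _‖ with hv
    set c := ‖S‖ + (eLpNorm g₀ ⊤ μ).toReal with hc
    have hd := hdist (v / (2 * (c + 1))) (by positivity)
    have hlt : c * (v / (2 * (c + 1))) < v := by
      rw [mul_div_assoc', div_lt_iff₀ (by positivity)]
      nlinarith [mul_nonneg hcge0 hpos.le]
    exact absurd hd (not_le.mpr hlt)
  refine ⟨g₀, g₀meas, hfin, fun g => ?_, ?_⟩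
  · rw [main g]
    exact (hmem g).coeFn_toLp
  · refine le_antisymm ?_ ?_
    · refine S.opNorm_le_bound ENNReal.toReal_nonneg fun g => ?_
      rw [main g, Lp.norm_toLp]
      calc (eLpNorm (fun x => g₀ x * (g : X → ℂ) x) 2 μ).toReal
          ≤ (eLpNorm g₀ ⊤ μ * eLpNorm (⇑g) 2 μ).toReal :=
            ENNReal.toReal_mono (ENNReal.mul_ne_top hfin (Lp.eLpNorm_ne_top g))
              (emul _ (Lp.aestronglyMeasurable g))
        _ = (eLpNorm g₀ ⊤ μ).toReal * ‖g‖ := by rw [ENNReal.toReal_mul, Lp.norm_def]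
    · have hmono := ENNReal.toReal_mono ENNReal.coe_ne_top hessSup
      rw [ENNReal.coe_toReal, coe_nnnorm] at hmono
      exact hmono
end

section
/- Let n ≥ 1 and A ∈ M_n(ℂ). Then the operator norm of the Schur multiplication map S_A equals its completely bounded norm: ‖S_A‖ = sup_{k≥1} ‖S_{J_k ⊗ A}‖, the supremum over k of the operator norm of Schur multiplication by J_k ⊗ A on M_{kn}(ℂ). -/
open scoped Kronecker
open scoped InnerProductSpace ComplexConjugate

noncomputable section SchurAux
set_option maxHeartbeats 1000000
set_option synthInstance.maxHeartbeats 400000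

variable {m m' : Type*} [Fintype m] [DecidableEq m] [Fintype m'] [DecidableEq m']

/-- Coerce a plain function into `EuclideanSpace`. -/
def toES (f : m → ℂ) : EuclideanSpace ℂ m := (WithLp.equiv 2 (m → ℂ)).symm f

@[simp] lemma toES_apply (f : m → ℂ) (i : m) : toES f i = f i := rfl

lemma inner_toEuclideanCLM (M : Matrix m m ℂ) (u v : EuclideanSpace ℂ m) :
    ⟪u, Matrix.toEuclideanCLM (𝕜 := ℂ) M v⟫_ℂ = ∑ i, ∑ j, conj (u i) * (M i j * v j) := by
  rw [PiLp.inner_apply]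
  simp only [RCLike.inner_apply]
  have : ∀ i, (Matrix.toEuclideanCLM (𝕜 := ℂ) M v) i = ∑ j, M i j * v j := fun i => rfl
  simp only [this, Finset.sum_mul]
  exact Finset.sum_congr rfl fun i _ => Finset.sum_congr rfl fun j _ => by ring

lemma opNorm_le_of_inner {E F : Type*} [NormedAddCommGroup E] [InnerProductSpace ℂ E]
    [NormedAddCommGroup F] [InnerProductSpace ℂ F] (T : E →L[ℂ] F) (c : ℝ) (hc : 0 ≤ c)
    (h : ∀ u v, ‖⟪u, T v⟫_ℂ‖ ≤ c * ‖u‖ * ‖v‖) : ‖T‖ ≤ c := by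
  refine T.opNorm_le_bound hc fun v => ?_
  rcases eq_or_ne (T v) 0 with h0 | h0
  · simp [h0, mul_nonneg hc (norm_nonneg v)]
  · have h1 := h (T v) v
    rw [inner_self_eq_norm_sq_to_K (𝕜 := ℂ)] at h1
    have h2 : ‖T v‖ ^ 2 ≤ c * ‖T v‖ * ‖v‖ := by
      calc ‖T v‖ ^ 2 = ‖((‖T v‖ : ℂ) ^ 2)‖ := by simp [norm_pow]
        _ ≤ c * ‖T v‖ * ‖v‖ := h1
    have h3 : ‖T v‖ > 0 := norm_pos_iff.mpr h0
    nlinarith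

lemma norm_inner_CLM_le (M : Matrix m m ℂ) (u v : EuclideanSpace ℂ m) :
    ‖⟪u, Matrix.toEuclideanCLM (𝕜 := ℂ) M v⟫_ℂ‖ ≤
      ‖Matrix.toEuclideanCLM (𝕜 := ℂ) M‖ * ‖u‖ * ‖v‖ := by
  calc ‖⟪u, Matrix.toEuclideanCLM (𝕜 := ℂ) M v⟫_ℂ‖
      ≤ ‖u‖ * ‖Matrix.toEuclideanCLM (𝕜 := ℂ) M v‖ := norm_inner_le_norm _ _
    _ ≤ ‖u‖ * (‖Matrix.toEuclideanCLM (𝕜 := ℂ) M‖ * ‖v‖) := by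
        gcongr; exact (Matrix.toEuclideanCLM (𝕜 := ℂ) M).le_opNorm v
    _ = _ := by ring

omit [DecidableEq m] in
lemma coord_le_norm (u : EuclideanSpace ℂ m) (i : m) : ‖u i‖ ≤ ‖u‖ := by
  have h1 : ‖u i‖ ^ 2 ≤ ∑ j, ‖u j‖ ^ 2 :=
    Finset.single_le_sum (f := fun j => ‖u j‖ ^ 2) (fun j _ => sq_nonneg _) (Finset.mem_univ i)
  calc ‖u i‖ = Real.sqrt (‖u i‖ ^ 2) := (Real.sqrt_sq (norm_nonneg _)).symm
    _ ≤ Real.sqrt (∑ j, ‖u j‖ ^ 2) := Real.sqrt_le_sqrt h1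
    _ = ‖u‖ := (EuclideanSpace.norm_eq u).symm

lemma entry_le_norm (M : Matrix m m ℂ) (i j : m) :
    ‖M i j‖ ≤ ‖Matrix.toEuclideanCLM (𝕜 := ℂ) M‖ := by
  have h := norm_inner_CLM_le M (EuclideanSpace.single i 1) (EuclideanSpace.single j 1)
  rw [inner_toEuclideanCLM] at h
  have hs : ∑ a, ∑ b, conj ((EuclideanSpace.single i (1:ℂ)) a) *
      (M a b * (EuclideanSpace.single j (1:ℂ)) b) = M i j := by
    simp [EuclideanSpace.single_apply]
  rw [hs] at h
  simpa [EuclideanSpace.norm_single] using h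

lemma norm_toES_comp_equiv (e : m' ≃ m) (u : EuclideanSpace ℂ m) :
    ‖toES (fun i' => u (e i'))‖ = ‖u‖ := by
  rw [EuclideanSpace.norm_eq, EuclideanSpace.norm_eq]
  congr 1
  exact Fintype.sum_equiv e _ _ (fun i' => rfl)

lemma norm_CLM_submatrix_le (e : m' ≃ m) (M : Matrix m m ℂ) :
    ‖Matrix.toEuclideanCLM (𝕜 := ℂ) (M.submatrix e e)‖ ≤
      ‖Matrix.toEuclideanCLM (𝕜 := ℂ) M‖ := by
  apply opNorm_le_of_inner _ _ (norm_nonneg _)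
  intro u v
  have h1 : ⟪u, Matrix.toEuclideanCLM (𝕜 := ℂ) (M.submatrix e e) v⟫_ℂ =
      ⟪toES (fun i => u (e.symm i)),
        Matrix.toEuclideanCLM (𝕜 := ℂ) M (toES (fun j => v (e.symm j)))⟫_ℂ := by
    rw [inner_toEuclideanCLM, inner_toEuclideanCLM]
    refine Fintype.sum_equiv e _ _ fun i' => ?_
    refine Fintype.sum_equiv e _ _ fun j' => ?_
    rw [toES_apply, toES_apply, e.symm_apply_apply, e.symm_apply_apply]; rfl
  rw [h1]
  calc _ ≤ ‖Matrix.toEuclideanCLM (𝕜 := ℂ) M‖ *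
        ‖toES (fun i => u (e.symm i))‖ * ‖toES (fun j => v (e.symm j))‖ :=
        norm_inner_CLM_le _ _ _
    _ = _ := by rw [norm_toES_comp_equiv e.symm u, norm_toES_comp_equiv e.symm v]

lemma norm_CLM_submatrix (e : m' ≃ m) (M : Matrix m m ℂ) :
    ‖Matrix.toEuclideanCLM (𝕜 := ℂ) (M.submatrix e e)‖ =
      ‖Matrix.toEuclideanCLM (𝕜 := ℂ) M‖ := by
  refine le_antisymm (norm_CLM_submatrix_le e M) ?_
  have h := norm_CLM_submatrix_le e.symm (M.submatrix e e)
  have h2 : (M.submatrix e e).submatrix e.symm e.symm = M := by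
    ext i j; simp
  rw [h2] at h; exact h

lemma sum_prod_snd {ι τ : Type*} [Fintype ι] [Fintype τ] (F : ι × τ → ℂ) :
    ∑ x, F x = ∑ p, ∑ i, F (i, p) := by
  rw [Fintype.sum_prod_type]; exact Finset.sum_comm

lemma rsum_prod_snd {ι τ : Type*} [Fintype ι] [Fintype τ] (F : ι × τ → ℝ) :
    ∑ x, F x = ∑ p, ∑ i, F (i, p) := by
  rw [Fintype.sum_prod_type]; exact Finset.sum_comm

lemma sum_prod_prod {ι τ : Type*} [Fintype ι] [Fintype τ] (f : ι × τ → ι × τ → ℂ) :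
    ∑ x, ∑ y, f x y = ∑ p : τ, ∑ q : τ, ∑ i : ι, ∑ j : ι, f (i, p) (j, q) := by
  rw [sum_prod_snd (fun x => ∑ y, f x y)]
  refine Finset.sum_congr rfl fun p _ => ?_
  calc ∑ i, ∑ y, f (i, p) y = ∑ i, ∑ q, ∑ j, f (i, p) (j, q) :=
        Finset.sum_congr rfl fun i _ => sum_prod_snd _
    _ = ∑ q, ∑ i, ∑ j, f (i, p) (j, q) := Finset.sum_comm

/-- Equivalence collapsing the `Fin 1` factor. -/
def eProdOne (n : ℕ) : Fin 1 × Fin n ≃ Fin n where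
  toFun x := x.2
  invFun p := (0, p)
  left_inv := by rintro ⟨i, p⟩; have : i = 0 := Subsingleton.elim _ _; rw [this]
  right_inv p := rfl

end SchurAux

noncomputable section SchurKey
set_option maxHeartbeats 1000000

lemma schur_cb_aux {n k : ℕ} (A : Matrix (Fin n) (Fin n) ℂ)
    (B : Matrix (Fin k × Fin n) (Fin k × Fin n) ℂ)
    (hB : ‖Matrix.toEuclideanCLM (𝕜 := ℂ) B‖ ≤ 1) (c : ℝ) (hc : 0 ≤ c)
    (hS : ∀ C : Matrix (Fin n) (Fin n) ℂ, ‖Matrix.toEuclideanCLM (𝕜 := ℂ) C‖ ≤ 1 →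
      ‖Matrix.toEuclideanCLM (𝕜 := ℂ) (A.hadamard C)‖ ≤ c) :
    ‖Matrix.toEuclideanCLM (𝕜 := ℂ)
      (((Matrix.of fun _ _ => (1 : ℂ) : Matrix (Fin k) (Fin k) ℂ) ⊗ₖ A).hadamard B)‖ ≤ c := by
  apply opNorm_le_of_inner _ _ hc
  intro u v
  set α : Fin n → ℝ := fun p => Real.sqrt (∑ i, ‖u (i, p)‖ ^ 2) with hα
  set β : Fin n → ℝ := fun q => Real.sqrt (∑ j, ‖v (j, q)‖ ^ 2) with hβ
  set s : Fin n → Fin n → ℂ :=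
    fun p q => ∑ i, ∑ j, conj (u (i, p)) * (B (i, p) (j, q) * v (j, q)) with hs
  set C : Matrix (Fin n) (Fin n) ℂ := Matrix.of fun p q =>
    if α p = 0 ∨ β q = 0 then 0 else (((α p : ℂ)) * (β q : ℂ))⁻¹ * s p q with hCdef
  have hα_nonneg : ∀ p, 0 ≤ α p := fun p => Real.sqrt_nonneg _
  have hβ_nonneg : ∀ q, 0 ≤ β q := fun q => Real.sqrt_nonneg _
  have hαsq : ∀ p, α p ^ 2 = ∑ i, ‖u (i, p)‖ ^ 2 := fun p =>
    Real.sq_sqrt (Finset.sum_nonneg fun i _ => sq_nonneg _)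
  have hβsq : ∀ q, β q ^ 2 = ∑ j, ‖v (j, q)‖ ^ 2 := fun q =>
    Real.sq_sqrt (Finset.sum_nonneg fun j _ => sq_nonneg _)
  have hu0 : ∀ p, α p = 0 → ∀ i, u (i, p) = 0 := by
    intro p hp i
    have h1 : ∑ i, ‖u (i, p)‖ ^ 2 = 0 := by rw [← hαsq p, hp]; ring
    have h2 := (Finset.sum_eq_zero_iff_of_nonneg (fun i _ => sq_nonneg ‖u (i, p)‖)).mp h1
    have := h2 i (Finset.mem_univ i)
    simpa using this
  have hv0 : ∀ q, β q = 0 → ∀ j, v (j, q) = 0 := by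
    intro q hq j
    have h1 : ∑ j, ‖v (j, q)‖ ^ 2 = 0 := by rw [← hβsq q, hq]; ring
    have h2 := (Finset.sum_eq_zero_iff_of_nonneg (fun j _ => sq_nonneg ‖v (j, q)‖)).mp h1
    have := h2 j (Finset.mem_univ j)
    simpa using this
  have hs0u : ∀ p q, α p = 0 → s p q = 0 := by
    intro p q hp
    refine Finset.sum_eq_zero fun i _ => Finset.sum_eq_zero fun j _ => ?_
    rw [hu0 p hp i]; simp
  have hs0v : ∀ p q, β q = 0 → s p q = 0 := by
    intro p q hq
    refine Finset.sum_eq_zero fun i _ => Finset.sum_eq_zero fun j _ => ?_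
    rw [hv0 q hq j]; simp
  have hαC : ∀ p q, (α p : ℂ) * (β q : ℂ) * C p q = s p q := by
    intro p q
    by_cases h : α p = 0 ∨ β q = 0
    · have hC0 : C p q = 0 := by rw [hCdef]; simp only [Matrix.of_apply]; rw [if_pos h]
      rw [hC0, mul_zero]
      rcases h with h | h
      · rw [hs0u p q h]
      · rw [hs0v p q h]
    · push_neg at h
      have hC0 : C p q = (((α p : ℂ)) * (β q : ℂ))⁻¹ * s p q := by
        rw [hCdef]; simp only [Matrix.of_apply]; rw [if_neg (by push_neg; exact h)]
      rw [hC0]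
      have h1 : (α p : ℂ) ≠ 0 := Complex.ofReal_ne_zero.mpr h.1
      have h2 : (β q : ℂ) ≠ 0 := Complex.ofReal_ne_zero.mpr h.2
      field_simp
  have hC1 : ‖Matrix.toEuclideanCLM (𝕜 := ℂ) C‖ ≤ 1 := by
    apply opNorm_le_of_inner _ _ zero_le_one
    intro w z
    set uh : EuclideanSpace ℂ (Fin k × Fin n) :=
      toES (fun x => if α x.2 = 0 then 0 else ((α x.2 : ℂ))⁻¹ * w x.2 * u x) with huh
    set vh : EuclideanSpace ℂ (Fin k × Fin n) :=
      toES (fun x => if β x.2 = 0 then 0 else ((β x.2 : ℂ))⁻¹ * z x.2 * v x) with hvh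
    have hinner : ⟪w, Matrix.toEuclideanCLM (𝕜 := ℂ) C z⟫_ℂ =
        ⟪uh, Matrix.toEuclideanCLM (𝕜 := ℂ) B vh⟫_ℂ := by
      rw [inner_toEuclideanCLM, inner_toEuclideanCLM, sum_prod_prod]
      refine Finset.sum_congr rfl fun p _ => Finset.sum_congr rfl fun q _ => ?_
      by_cases hp : α p = 0
      · have hC0 : C p q = 0 := by
          rw [hCdef]; simp only [Matrix.of_apply]; rw [if_pos (Or.inl hp)]
        rw [hC0]
        refine Eq.trans ?_ (Finset.sum_eq_zero fun i _ => Finset.sum_eq_zero fun j _ => ?_).symm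
        · ring
        · have : uh (i, p) = 0 := by rw [huh, toES_apply, if_pos hp]
          rw [this]; simp
      · by_cases hq : β q = 0
        · have hC0 : C p q = 0 := by
            rw [hCdef]; simp only [Matrix.of_apply]; rw [if_pos (Or.inr hq)]
          rw [hC0]
          refine Eq.trans ?_ (Finset.sum_eq_zero fun i _ => Finset.sum_eq_zero fun j _ => ?_).symm
          · ring
          · have : vh (j, q) = 0 := by rw [hvh, toES_apply, if_pos hq]
            rw [this]; simp
        · have hC0 : C p q = (((α p : ℂ)) * (β q : ℂ))⁻¹ * s p q := by
            rw [hCdef]; simp only [Matrix.of_apply]; rw [if_neg (by push_neg; exact ⟨hp, hq⟩)]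
          have hterm : ∀ i j, conj (uh (i, p)) * (B (i, p) (j, q) * vh (j, q)) =
              (((α p : ℂ))⁻¹ * conj (w p) * (((β q : ℂ))⁻¹ * z q)) *
                (conj (u (i, p)) * (B (i, p) (j, q) * v (j, q))) := by
            intro i j
            have h1 : uh (i, p) = ((α p : ℂ))⁻¹ * w p * u (i, p) := by
              rw [huh, toES_apply, if_neg hp]
            have h2 : vh (j, q) = ((β q : ℂ))⁻¹ * z q * v (j, q) := by
              rw [hvh, toES_apply, if_neg hq]
            rw [h1, h2, map_mul, map_mul, map_inv₀, Complex.conj_ofReal]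
            ring
          calc conj (w p) * (C p q * z q)
              = (((α p : ℂ))⁻¹ * conj (w p) * (((β q : ℂ))⁻¹ * z q)) * s p q := by
                rw [hC0, mul_inv]; ring
            _ = ∑ i, ∑ j, conj (uh (i, p)) * (B (i, p) (j, q) * vh (j, q)) := by
                rw [hs]
                simp only [Finset.mul_sum]
                exact Finset.sum_congr rfl fun i _ => Finset.sum_congr rfl fun j _ =>
                  (hterm i j).symm
    have hnormuh : ‖uh‖ ≤ ‖w‖ := by
      rw [EuclideanSpace.norm_eq, EuclideanSpace.norm_eq]
      apply Real.sqrt_le_sqrt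
      rw [rsum_prod_snd (fun x => ‖uh x‖ ^ 2)]
      refine Finset.sum_le_sum fun p _ => ?_
      by_cases hp : α p = 0
      · have : ∀ i : Fin k, ‖uh (i, p)‖ ^ 2 = 0 := by
          intro i
          have : uh (i, p) = 0 := by rw [huh, toES_apply, if_pos hp]
          rw [this]; simp
        rw [Finset.sum_congr rfl fun i _ => this i]
        simp [sq_nonneg]
      · have hcalc : ∀ i : Fin k, ‖uh (i, p)‖ ^ 2 = (α p)⁻¹ ^ 2 * ‖w p‖ ^ 2 * ‖u (i, p)‖ ^ 2 := by
          intro i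
          have h1 : uh (i, p) = ((α p : ℂ))⁻¹ * w p * u (i, p) := by
            rw [huh, toES_apply, if_neg hp]
          rw [h1, norm_mul, norm_mul, norm_inv, Complex.norm_real, Real.norm_eq_abs,
            abs_of_nonneg (hα_nonneg p)]
          ring
        rw [Finset.sum_congr rfl fun i _ => hcalc i, ← Finset.mul_sum, ← hαsq p]
        have : (α p)⁻¹ ^ 2 * ‖w p‖ ^ 2 * α p ^ 2 = ‖w p‖ ^ 2 := by
          field_simp
        rw [this]
    have hnormvh : ‖vh‖ ≤ ‖z‖ := by
      rw [EuclideanSpace.norm_eq, EuclideanSpace.norm_eq]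
      apply Real.sqrt_le_sqrt
      rw [rsum_prod_snd (fun x => ‖vh x‖ ^ 2)]
      refine Finset.sum_le_sum fun q _ => ?_
      by_cases hq : β q = 0
      · have : ∀ j : Fin k, ‖vh (j, q)‖ ^ 2 = 0 := by
          intro j
          have : vh (j, q) = 0 := by rw [hvh, toES_apply, if_pos hq]
          rw [this]; simp
        rw [Finset.sum_congr rfl fun j _ => this j]
        simp [sq_nonneg]
      · have hcalc : ∀ j : Fin k, ‖vh (j, q)‖ ^ 2 = (β q)⁻¹ ^ 2 * ‖z q‖ ^ 2 * ‖v (j, q)‖ ^ 2 := by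
          intro j
          have h1 : vh (j, q) = ((β q : ℂ))⁻¹ * z q * v (j, q) := by
            rw [hvh, toES_apply, if_neg hq]
          rw [h1, norm_mul, norm_mul, norm_inv, Complex.norm_real, Real.norm_eq_abs,
            abs_of_nonneg (hβ_nonneg q)]
          ring
        rw [Finset.sum_congr rfl fun j _ => hcalc j, ← Finset.mul_sum, ← hβsq q]
        have : (β q)⁻¹ ^ 2 * ‖z q‖ ^ 2 * β q ^ 2 = ‖z q‖ ^ 2 := by
          field_simp
        rw [this]
    calc ‖⟪w, Matrix.toEuclideanCLM (𝕜 := ℂ) C z⟫_ℂ‖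
        = ‖⟪uh, Matrix.toEuclideanCLM (𝕜 := ℂ) B vh⟫_ℂ‖ := by rw [hinner]
      _ ≤ ‖Matrix.toEuclideanCLM (𝕜 := ℂ) B‖ * ‖uh‖ * ‖vh‖ := norm_inner_CLM_le _ _ _
      _ ≤ 1 * ‖w‖ * ‖z‖ :=
          mul_le_mul (mul_le_mul hB hnormuh (norm_nonneg _) zero_le_one) hnormvh
            (norm_nonneg _) (by positivity)
  -- the vectors ξ, η
  set ξ : EuclideanSpace ℂ (Fin n) := toES (fun p => (α p : ℂ)) with hξ
  set η : EuclideanSpace ℂ (Fin n) := toES (fun q => (β q : ℂ)) with hη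
  have hnormξ : ‖ξ‖ = ‖u‖ := by
    rw [EuclideanSpace.norm_eq, EuclideanSpace.norm_eq, rsum_prod_snd (fun x => ‖u x‖ ^ 2)]
    congr 1
    refine Finset.sum_congr rfl fun p _ => ?_
    rw [hξ, toES_apply, Complex.norm_real, Real.norm_eq_abs, abs_of_nonneg (hα_nonneg p), hαsq p]
  have hnormη : ‖η‖ = ‖v‖ := by
    rw [EuclideanSpace.norm_eq, EuclideanSpace.norm_eq, rsum_prod_snd (fun x => ‖v x‖ ^ 2)]
    congr 1
    refine Finset.sum_congr rfl fun q _ => ?_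
    rw [hη, toES_apply, Complex.norm_real, Real.norm_eq_abs, abs_of_nonneg (hβ_nonneg q), hβsq q]
  have hmain : ⟪u, Matrix.toEuclideanCLM (𝕜 := ℂ)
      (((Matrix.of fun _ _ => (1 : ℂ) : Matrix (Fin k) (Fin k) ℂ) ⊗ₖ A).hadamard B) v⟫_ℂ =
      ⟪ξ, Matrix.toEuclideanCLM (𝕜 := ℂ) (A.hadamard C) η⟫_ℂ := by
    rw [inner_toEuclideanCLM, inner_toEuclideanCLM, sum_prod_prod]
    refine Finset.sum_congr rfl fun p _ => Finset.sum_congr rfl fun q _ => ?_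
    have hLHS : ∑ i, ∑ j, conj (u (i, p)) *
        ((((Matrix.of fun _ _ => (1 : ℂ) : Matrix (Fin k) (Fin k) ℂ) ⊗ₖ A).hadamard B)
          (i, p) (j, q) * v (j, q)) = A p q * s p q := by
      rw [hs, Finset.mul_sum]
      refine Finset.sum_congr rfl fun i _ => ?_
      rw [Finset.mul_sum]
      refine Finset.sum_congr rfl fun j _ => ?_
      have : (((Matrix.of fun _ _ => (1 : ℂ) : Matrix (Fin k) (Fin k) ℂ) ⊗ₖ A).hadamard B)
          (i, p) (j, q) = A p q * B (i, p) (j, q) := by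
        rw [Matrix.hadamard_apply, Matrix.kroneckerMap_apply, Matrix.of_apply, one_mul]
      rw [this]; ring
    rw [hLHS, hξ, hη, toES_apply, toES_apply, Complex.conj_ofReal, Matrix.hadamard_apply]
    calc A p q * s p q = A p q * ((α p : ℂ) * (β q : ℂ) * C p q) := by rw [hαC p q]
      _ = (α p : ℂ) * (A p q * C p q * (β q : ℂ)) := by ring
  calc ‖⟪u, Matrix.toEuclideanCLM (𝕜 := ℂ)
        (((Matrix.of fun _ _ => (1 : ℂ) : Matrix (Fin k) (Fin k) ℂ) ⊗ₖ A).hadamard B) v⟫_ℂ‖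
      = ‖⟪ξ, Matrix.toEuclideanCLM (𝕜 := ℂ) (A.hadamard C) η⟫_ℂ‖ := by rw [hmain]
    _ ≤ ‖Matrix.toEuclideanCLM (𝕜 := ℂ) (A.hadamard C)‖ * ‖ξ‖ * ‖η‖ := norm_inner_CLM_le _ _ _
    _ ≤ c * ‖ξ‖ * ‖η‖ :=
        mul_le_mul_of_nonneg_right
          (mul_le_mul_of_nonneg_right (hS C hC1) (norm_nonneg ξ)) (norm_nonneg η)
    _ = c * ‖u‖ * ‖v‖ := by rw [hnormξ, hnormη]

end SchurKey

/-- **The Schur multiplier norm equals its completely bounded norm.**  For `A ∈ M_n(ℂ)`, the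
operator norm of Schur multiplication `S_A` on `M_n(ℂ)` (with the operator norm on matrices)
equals `sup_{k ≥ 1} ‖S_{J_k ⊗ A}‖`, the supremum over all matrix amplifications. -/
theorem schur_multiplier_norm_eq_cb_norm (n : ℕ) (hn : 1 ≤ n)
    (A : Matrix (Fin n) (Fin n) ℂ) :
    sSup {r : ℝ | ∃ B : Matrix (Fin n) (Fin n) ℂ,
        ‖Matrix.toEuclideanCLM (𝕜 := ℂ) B‖ ≤ 1 ∧
        r = ‖Matrix.toEuclideanCLM (𝕜 := ℂ) (A.hadamard B)‖} =
    sSup {r : ℝ | ∃ k : ℕ, 1 ≤ k ∧ ∃ B : Matrix (Fin k × Fin n) (Fin k × Fin n) ℂ,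
        ‖Matrix.toEuclideanCLM (𝕜 := ℂ) B‖ ≤ 1 ∧
        r = ‖Matrix.toEuclideanCLM (𝕜 := ℂ)
              (((Matrix.of fun _ _ => (1 : ℂ) : Matrix (Fin k) (Fin k) ℂ) ⊗ₖ A).hadamard B)‖} := by
  set S1 : Set ℝ := {r : ℝ | ∃ B : Matrix (Fin n) (Fin n) ℂ,
      ‖Matrix.toEuclideanCLM (𝕜 := ℂ) B‖ ≤ 1 ∧
      r = ‖Matrix.toEuclideanCLM (𝕜 := ℂ) (A.hadamard B)‖} with hS1def
  set S2 : Set ℝ := {r : ℝ | ∃ k : ℕ, 1 ≤ k ∧ ∃ B : Matrix (Fin k × Fin n) (Fin k × Fin n) ℂ,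
      ‖Matrix.toEuclideanCLM (𝕜 := ℂ) B‖ ≤ 1 ∧
      r = ‖Matrix.toEuclideanCLM (𝕜 := ℂ)
            (((Matrix.of fun _ _ => (1 : ℂ) : Matrix (Fin k) (Fin k) ℂ) ⊗ₖ A).hadamard B)‖}
    with hS2def
  have h0S1 : (0 : ℝ) ∈ S1 :=
    ⟨0, by rw [map_zero, norm_zero]; exact zero_le_one,
      by rw [Matrix.hadamard_zero, map_zero, norm_zero]⟩
  have hub1 : ∀ r ∈ S1, r ≤ ∑ p, ∑ q, ‖A p q‖ := by
    rintro r ⟨B, hB, rfl⟩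
    apply opNorm_le_of_inner _ _ (Finset.sum_nonneg fun p _ =>
      Finset.sum_nonneg fun q _ => norm_nonneg _)
    intro u v
    rw [inner_toEuclideanCLM]
    calc ‖∑ p, ∑ q, conj (u p) * (A.hadamard B p q * v q)‖
        ≤ ∑ p, ∑ q, ‖conj (u p) * (A.hadamard B p q * v q)‖ :=
          (norm_sum_le _ _).trans (Finset.sum_le_sum fun p _ => norm_sum_le _ _)
      _ ≤ ∑ p, ∑ q, ‖A p q‖ * ‖u‖ * ‖v‖ := by
          refine Finset.sum_le_sum fun p _ => Finset.sum_le_sum fun q _ => ?_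
          have h1 : ‖u p‖ ≤ ‖u‖ := coord_le_norm u p
          have h2 : ‖v q‖ ≤ ‖v‖ := coord_le_norm v q
          have hBpq : ‖B p q‖ ≤ 1 := (entry_le_norm B p q).trans hB
          calc ‖conj (u p) * (A.hadamard B p q * v q)‖
              = ‖u p‖ * (‖A p q‖ * (‖B p q‖ * ‖v q‖)) := by
                rw [Matrix.hadamard_apply, norm_mul, norm_mul, norm_mul, RCLike.norm_conj]
                ring
            _ ≤ ‖u‖ * (‖A p q‖ * (1 * ‖v‖)) :=
                mul_le_mul h1
                  (mul_le_mul_of_nonneg_left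
                    (mul_le_mul hBpq h2 (norm_nonneg _) zero_le_one) (norm_nonneg (A p q)))
                  (by positivity) (norm_nonneg _)
            _ = ‖A p q‖ * ‖u‖ * ‖v‖ := by ring
      _ = (∑ p, ∑ q, ‖A p q‖) * ‖u‖ * ‖v‖ := by simp [Finset.sum_mul]
  have hbdd1 : BddAbove S1 := ⟨_, hub1⟩
  have hne1 : S1.Nonempty := ⟨0, h0S1⟩
  have hc0 : 0 ≤ sSup S1 := le_csSup hbdd1 h0S1
  have hS : ∀ C : Matrix (Fin n) (Fin n) ℂ, ‖Matrix.toEuclideanCLM (𝕜 := ℂ) C‖ ≤ 1 →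
      ‖Matrix.toEuclideanCLM (𝕜 := ℂ) (A.hadamard C)‖ ≤ sSup S1 := fun C hC =>
    le_csSup hbdd1 ⟨C, hC, rfl⟩
  have hkey : ∀ r ∈ S2, r ≤ sSup S1 := by
    rintro r ⟨k, hk, B, hB, rfl⟩
    exact schur_cb_aux A B hB _ hc0 hS
  have hbdd2 : BddAbove S2 := ⟨_, hkey⟩
  have hne2 : S2.Nonempty :=
    ⟨0, 1, le_refl 1, 0, by rw [map_zero, norm_zero]; exact zero_le_one,
      by rw [Matrix.hadamard_zero, map_zero, norm_zero]⟩
  refine le_antisymm (csSup_le hne1 ?_) (csSup_le hne2 hkey)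
  rintro r ⟨B, hB, rfl⟩
  refine le_csSup hbdd2 ⟨1, le_refl 1, B.submatrix (eProdOne n) (eProdOne n), ?_, ?_⟩
  · rw [norm_CLM_submatrix]; exact hB
  · have hEq : ((Matrix.of fun _ _ => (1 : ℂ) : Matrix (Fin 1) (Fin 1) ℂ) ⊗ₖ A).hadamard
        (B.submatrix (eProdOne n) (eProdOne n)) =
        (A.hadamard B).submatrix (eProdOne n) (eProdOne n) := by
      ext x y
      rcases x with ⟨i, p⟩; rcases y with ⟨j, q⟩
      rw [Matrix.hadamard_apply, Matrix.kroneckerMap_apply, Matrix.submatrix_apply,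
        Matrix.submatrix_apply, Matrix.hadamard_apply, Matrix.of_apply, one_mul]
      rfl
    rw [hEq, norm_CLM_submatrix]
end
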